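/- arXiv:0804.1206 — 4 statements merged into one kernel-verified Lean document; each statement's English description precedes it below -/
import Mathlib

section
/- Let R be a complete rewriting system on (X ∪ X⁻¹)* satisfying condition C⁺, and let R⁺ be the subset of rules with positive left-hand side. Then R⁺ is a complete rewriting system on X*: it is terminating, and any two R⁺-reducts of a positive word have a common R⁺-descendant. -/
open Relation

/-- One-step reduction of the string rewriting system `R`. -/
def RWStep {α : Type*} (R : Set (List α × List α)) (u v : List α) : Prop :=
  ∃ a l r b, (l, r) ∈ R ∧ u = a ++ l ++ b ∧ v = a ++ r ++ b

/-- `R` is terminating: there is no infinite sequence of one-step reductions. -/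
def RWTerminating {α : Type*} (R : Set (List α × List α)) : Prop :=
  ¬ ∃ f : ℕ → List α, ∀ n, RWStep R (f n) (f (n + 1))

/-- A word is irreducible if no one-step reduction applies to it. -/
def RWIrred {α : Type*} (R : Set (List α × List α)) (w : List α) : Prop :=
  ¬ ∃ z, RWStep R w z


/-- A word over `X ∪ X⁻¹` (modelled as `X ⊕ X`, left = positive letters) is positive
if all its letters are positive. -/
def RWPositive {X : Type*} (w : List (X ⊕ X)) : Prop :=
  ∀ c ∈ w, Sum.isLeft c = true

/-- The subsystem of rules with positive left-hand side. -/
def RWPos {X : Type*} (R : Set (List (X ⊕ X) × List (X ⊕ X))) :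
    Set (List (X ⊕ X) × List (X ⊕ X)) :=
  {p ∈ R | RWPositive p.1}

/-- If `R` is complete and satisfies C⁺, then `R⁺` is a complete rewriting system on
positive words: it is terminating and any two `R⁺`-reducts of a positive word have a
common `R⁺`-descendant. -/
theorem pos_rules_complete {X : Type*} (R : Set (List (X ⊕ X) × List (X ⊕ X)))
    (hT : RWTerminating R)
    (hConf : ∀ w u v : List (X ⊕ X), Relation.ReflTransGen (RWStep R) w u →
      Relation.ReflTransGen (RWStep R) w v →
      ∃ z, Relation.ReflTransGen (RWStep R) u z ∧ Relation.ReflTransGen (RWStep R) v z)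
    (hCplus : ∀ p ∈ R, RWPositive p.1 → RWPositive p.2) :
    RWTerminating (RWPos R) ∧
    (∀ w u v : List (X ⊕ X), RWPositive w →
      Relation.ReflTransGen (RWStep (RWPos R)) w u →
      Relation.ReflTransGen (RWStep (RWPos R)) w v →
      ∃ z, Relation.ReflTransGen (RWStep (RWPos R)) u z ∧
        Relation.ReflTransGen (RWStep (RWPos R)) v z) := by
  -- a one-step R-reduction of a positive word is an RWPos R step with positive result
  have key : ∀ u v : List (X ⊕ X), RWPositive u → RWStep R u v →
      RWStep (RWPos R) u v ∧ RWPositive v := by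
    rintro u v hu ⟨a, l, r, b, hrule, rfl, rfl⟩
    have ha : RWPositive a := fun c hc => hu c (by simp [hc])
    have hl : RWPositive l := fun c hc => hu c (by simp [hc])
    have hb : RWPositive b := fun c hc => hu c (by simp [hc])
    have hr : RWPositive r := hCplus (l, r) hrule hl
    refine ⟨⟨a, l, r, b, ⟨hrule, hl⟩, rfl, rfl⟩, ?_⟩
    intro c hc
    simp only [List.mem_append] at hc
    rcases hc with (hc | hc) | hc
    · exact ha c hc
    · exact hr c hc
    · exact hb c hc
  have keyRT : ∀ u v : List (X ⊕ X), RWPositive u → ReflTransGen (RWStep R) u v →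
      ReflTransGen (RWStep (RWPos R)) u v ∧ RWPositive v := by
    intro u v hu h
    induction h with
    | refl => exact ⟨ReflTransGen.refl, hu⟩
    | tail _ hstep ih =>
      obtain ⟨hrt, hpos⟩ := ih
      obtain ⟨hstep', hpos'⟩ := key _ _ hpos hstep
      exact ⟨hrt.tail hstep', hpos'⟩
  have sub : ∀ u v : List (X ⊕ X), RWStep (RWPos R) u v → RWStep R u v := by
    rintro u v ⟨a, l, r, b, ⟨hrule, _⟩, rfl, rfl⟩
    exact ⟨a, l, r, b, hrule, rfl, rfl⟩
  constructor
  · rintro ⟨f, hf⟩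
    exact hT ⟨f, fun n => sub _ _ (hf n)⟩
  · intro w u v hw hu hv
    have hu' := ReflTransGen.mono sub _ _ hu
    have hv' := ReflTransGen.mono sub _ _ hv
    obtain ⟨z, hz1, hz2⟩ := hConf w u v hu' hv'
    have hupos : RWPositive u := (keyRT w u hw hu').2
    have hvpos : RWPositive v := (keyRT w v hw hv').2
    exact ⟨z, (keyRT u z hupos hz1).1, (keyRT v z hvpos hz2).1⟩
end

section
/- Let R be a complete rewriting system on (X ∪ X⁻¹)* satisfying condition C⁺, and let u, v be positive words (elements of X*). Then u and v are equivalent modulo R if and only if they are equivalent modulo R⁺. -/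
open Relation

private theorem rtg_to_eqvGen {α : Type*} {r : α → α → Prop} {a b : α}
    (h : Relation.ReflTransGen r a b) : Relation.EqvGen r a b := by
  induction h with
  | refl => exact Relation.EqvGen.refl _
  | tail _ hbc ih => exact Relation.EqvGen.trans _ _ _ ih (Relation.EqvGen.rel _ _ hbc)

/-- If `R` is complete and satisfies C⁺, then two positive words are equivalent modulo
`R` iff they are equivalent modulo `R⁺`. -/
theorem pos_equiv_iff {X : Type*} (R : Set (List (X ⊕ X) × List (X ⊕ X)))
    (hT : RWTerminating R)
    (hConf : ∀ w u v : List (X ⊕ X), Relation.ReflTransGen (RWStep R) w u →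
      Relation.ReflTransGen (RWStep R) w v →
      ∃ z, Relation.ReflTransGen (RWStep R) u z ∧ Relation.ReflTransGen (RWStep R) v z)
    (hCplus : ∀ p ∈ R, RWPositive p.1 → RWPositive p.2)
    (u v : List (X ⊕ X)) (hu : RWPositive u) (hv : RWPositive v) :
    Relation.EqvGen (RWStep R) u v ↔ Relation.EqvGen (RWStep (RWPos R)) u v := by
  constructor
  · intro h
    -- Church–Rosser: u and v are joinable
    have join : ∃ z, Relation.ReflTransGen (RWStep R) u z ∧
        Relation.ReflTransGen (RWStep R) v z := by
      clear hu hv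
      induction h with
      | rel a b hab => exact ⟨b, Relation.ReflTransGen.single hab, Relation.ReflTransGen.refl⟩
      | refl a => exact ⟨a, Relation.ReflTransGen.refl, Relation.ReflTransGen.refl⟩
      | symm a b _ ih => obtain ⟨z, h1, h2⟩ := ih; exact ⟨z, h2, h1⟩
      | trans a b c _ _ ih1 ih2 =>
        obtain ⟨z1, ha, hb1⟩ := ih1
        obtain ⟨z2, hb2, hc⟩ := ih2
        obtain ⟨z, hz1, hz2⟩ := hConf b z1 z2 hb1 hb2
        exact ⟨z, ha.trans hz1, hc.trans hz2⟩
    obtain ⟨z, huz, hvz⟩ := join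
    -- steps from positive words are RWPos steps and preserve positivity
    have key : ∀ w w' : List (X ⊕ X), Relation.ReflTransGen (RWStep R) w w' →
        RWPositive w → Relation.ReflTransGen (RWStep (RWPos R)) w w' ∧ RWPositive w' := by
      intro w w' hww' hw
      induction hww' with
      | refl => exact ⟨Relation.ReflTransGen.refl, hw⟩
      | tail hab hbc ih =>
        obtain ⟨h1, hpos⟩ := ih
        obtain ⟨a, l, r, b, hlr, heq1, heq2⟩ := hbc
        have hl : RWPositive l := by
          intro c hc; exact hpos c (heq1 ▸ (by simp [hc]))
        have hr : RWPositive r := hCplus _ hlr hl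
        have hpos' : RWPositive (a ++ r ++ b) := by
          intro c hc
          simp only [List.mem_append] at hc
          rcases hc with (hc | hc) | hc
          · exact hpos c (heq1 ▸ (by simp [hc]))
          · exact hr c hc
          · exact hpos c (heq1 ▸ (by simp [hc]))
        exact ⟨h1.tail ⟨a, l, r, b, ⟨hlr, hl⟩, heq1, heq2⟩, heq2 ▸ hpos'⟩
    obtain ⟨h1, _⟩ := key u z huz hu
    obtain ⟨h2, _⟩ := key v z hvz hv
    exact (Relation.EqvGen.trans _ _ _
      (rtg_to_eqvGen h1)
      (Relation.EqvGen.symm _ _ (rtg_to_eqvGen h2)))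
  · intro h
    refine Relation.EqvGen.mono ?_ _ _ h
    rintro a b ⟨x, l, r, y, ⟨hR, _⟩, h1, h2⟩
    exact ⟨x, l, r, y, hR, h1, h2⟩
end

section
/- Let G be a group with monoid presentation Mon⟨X ∪ X⁻¹ | R ∪ R₀⟩ (where R₀ consists of the free-reduction relations x x⁻¹ = 1 and x⁻¹ x = 1), and suppose G admits a complete rewriting system R̂ (presenting the same congruence) that satisfies condition C⁺. Then the monoid M = Mon⟨X | R̂⁺⟩ embeds into G via the natural map sending each generator x ∈ X to its image in G. -/
open Relation

/-- The free-reduction rules `x x⁻¹ → 1`, `x⁻¹ x → 1`. -/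
def RWFreeRed (X : Type*) : Set (List (X ⊕ X) × List (X ⊕ X)) :=
  {p | ∃ x : X, p = ([Sum.inl x, Sum.inr x], []) ∨ p = ([Sum.inr x, Sum.inl x], [])}

private lemma rwstep_mono {α : Type*} {R S : Set (List α × List α)} (h : R ⊆ S)
    {u v : List α} (hs : RWStep R u v) : RWStep S u v := by
  obtain ⟨a, l, r, b, hmem, hu, hv⟩ := hs
  exact ⟨a, l, r, b, h hmem, hu, hv⟩

/-- Joinability from EqvGen, using confluence. -/
private lemma eqvGen_joinable {α : Type*} {r : α → α → Prop}
    (hConf : ∀ w u v, Relation.ReflTransGen r w u → Relation.ReflTransGen r w v →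
      ∃ z, Relation.ReflTransGen r u z ∧ Relation.ReflTransGen r v z)
    {u v : α} (h : Relation.EqvGen r u v) :
    ∃ z, Relation.ReflTransGen r u z ∧ Relation.ReflTransGen r v z := by
  induction h with
  | rel a b hab => exact ⟨b, Relation.ReflTransGen.single hab, Relation.ReflTransGen.refl⟩
  | refl a => exact ⟨a, Relation.ReflTransGen.refl, Relation.ReflTransGen.refl⟩
  | symm a b _ ih => obtain ⟨z, h1, h2⟩ := ih; exact ⟨z, h2, h1⟩
  | trans a b c _ _ ih1 ih2 =>
      obtain ⟨z1, ha, hb1⟩ := ih1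
      obtain ⟨z2, hb2, hc⟩ := ih2
      obtain ⟨z, hz1, hz2⟩ := hConf b z1 z2 hb1 hb2
      exact ⟨z, ha.trans hz1, hc.trans hz2⟩

private lemma positive_append {X : Type*} {a b : List (X ⊕ X)} (ha : RWPositive a)
    (hb : RWPositive b) : RWPositive (a ++ b) := by
  intro c hc
  rcases List.mem_append.1 hc with h | h
  exacts [ha c h, hb c h]

/-- A step from a positive word is a positive step, and preserves positivity. -/
private lemma step_of_positive {X : Type*} {Rhat : Set (List (X ⊕ X) × List (X ⊕ X))}
    (hCplus : ∀ p ∈ Rhat, RWPositive p.1 → RWPositive p.2)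
    {u v : List (X ⊕ X)} (hu : RWPositive u) (hs : RWStep Rhat u v) :
    RWStep (RWPos Rhat) u v ∧ RWPositive v := by
  obtain ⟨a, l, r, b, hmem, rfl, rfl⟩ := hs
  have ha : RWPositive a := fun c hc => hu c (by simp [hc])
  have hl : RWPositive l := fun c hc => hu c (by simp [hc])
  have hb : RWPositive b := fun c hc => hu c (by simp [hc])
  have hr : RWPositive r := hCplus (l, r) hmem hl
  exact ⟨⟨a, l, r, b, ⟨hmem, hl⟩, rfl, rfl⟩,
    positive_append (positive_append ha hr) hb⟩

private lemma rtg_of_positive {X : Type*} {Rhat : Set (List (X ⊕ X) × List (X ⊕ X))}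
    (hCplus : ∀ p ∈ Rhat, RWPositive p.1 → RWPositive p.2)
    {u v : List (X ⊕ X)} (hu : RWPositive u)
    (h : Relation.ReflTransGen (RWStep Rhat) u v) :
    Relation.ReflTransGen (RWStep (RWPos Rhat)) u v := by
  induction h using Relation.ReflTransGen.head_induction_on with
  | refl => exact Relation.ReflTransGen.refl
  | head hab _ ih =>
      obtain ⟨hstep, hpos⟩ := step_of_positive hCplus hu hab
      exact Relation.ReflTransGen.head hstep (ih hpos)

/-- If the group `G = Mon⟨X ∪ X⁻¹ | R ∪ R₀⟩` admits a complete rewriting system `R̂`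
presenting the same congruence and satisfying C⁺, then the monoid `M = Mon⟨X | R̂⁺⟩`
embeds into `G`: two positive words are equal in `G` iff they are equal in `M`. -/
theorem monoid_embeds_of_complete_Cplus {X : Type*} [Fintype X]
    (R Rhat : Set (List (X ⊕ X) × List (X ⊕ X)))
    (hpres : ∀ u v : List (X ⊕ X),
      Relation.EqvGen (RWStep Rhat) u v ↔ Relation.EqvGen (RWStep (R ∪ RWFreeRed X)) u v)
    (hT : RWTerminating Rhat)
    (hConf : ∀ w u v : List (X ⊕ X), Relation.ReflTransGen (RWStep Rhat) w u →
      Relation.ReflTransGen (RWStep Rhat) w v →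
      ∃ z, Relation.ReflTransGen (RWStep Rhat) u z ∧ Relation.ReflTransGen (RWStep Rhat) v z)
    (hCplus : ∀ p ∈ Rhat, RWPositive p.1 → RWPositive p.2) :
    ∀ u v : List (X ⊕ X), RWPositive u → RWPositive v →
      (Relation.EqvGen (RWStep (R ∪ RWFreeRed X)) u v ↔
        Relation.EqvGen (RWStep (RWPos Rhat)) u v) := by
  intro u v hu hv
  constructor
  · intro h
    obtain ⟨z, hz1, hz2⟩ := eqvGen_joinable hConf ((hpres u v).2 h)
    have h1 := rtg_of_positive hCplus hu hz1
    have h2 := rtg_of_positive hCplus hv hz2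
    have toE : ∀ {a b : List (X ⊕ X)}, Relation.ReflTransGen (RWStep (RWPos Rhat)) a b →
        Relation.EqvGen (RWStep (RWPos Rhat)) a b := by
      intro a b hab
      induction hab with
      | refl => exact Relation.EqvGen.refl _
      | tail _ hbc ih => exact Relation.EqvGen.trans _ _ _ ih (Relation.EqvGen.rel _ _ hbc)
    exact Relation.EqvGen.trans _ _ _ (toE h1) (Relation.EqvGen.symm _ _ (toE h2))
  · intro h
    refine (hpres u v).1 (Relation.EqvGen.mono ?_ u v h)
    intro a b hab
    exact rwstep_mono (fun p hp => hp.1) hab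
end

section
/- The monoid Mon⟨a, b, c | a³ = c, b² = c, ac = ca, bc = cb⟩ embeds into the braid group B₃ = Gp⟨a, b, c | a³ = b² = c⟩: two positive words over {a, b, c} are equal in B₃ if and only if they are equal in the monoid. -/
open Relation

/-- The relators of the braid group `B₃ = Gp⟨a, b, c | a³ = c, b² = c⟩`. -/
def B3Rels : Set (FreeGroup (Fin 3)) :=
  {FreeGroup.of 0 ^ 3 * (FreeGroup.of 2)⁻¹, FreeGroup.of 1 ^ 2 * (FreeGroup.of 2)⁻¹}

/-- The monoid relations `a³ = c`, `b² = c`, `ac = ca`, `bc = cb`. -/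
def B3MonRules : Set (List (Fin 3) × List (Fin 3)) :=
  {([0, 0, 0], [2]), ([1, 1], [2]), ([0, 2], [2, 0]), ([1, 2], [2, 1])}

/-! ### Auxiliary development -/

open Monoid

abbrev B3Qt := Relation.EqvGen (RWStep B3MonRules)

section RWlemmas

lemma b3qt_ctx {u v : List (Fin 3)} (a b : List (Fin 3)) (h : B3Qt u v) :
    B3Qt (a ++ u ++ b) (a ++ v ++ b) := by
  induction h with
  | rel x y hxy =>
    obtain ⟨p, l, r, q, hm, rfl, rfl⟩ := hxy
    exact EqvGen.rel _ _ ⟨a ++ p, l, r, q ++ b, hm, by simp, by simp⟩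
  | refl x => exact EqvGen.refl _
  | symm x y _ ih => exact ih.symm _ _
  | trans x y z _ _ ih1 ih2 => exact ih1.trans _ _ _ ih2

lemma b3qt_congrL {u v : List (Fin 3)} (a : List (Fin 3)) (h : B3Qt u v) :
    B3Qt (a ++ u) (a ++ v) := by
  simpa using b3qt_ctx a [] h

lemma b3qt_congrR {u v : List (Fin 3)} (b : List (Fin 3)) (h : B3Qt u v) :
    B3Qt (u ++ b) (v ++ b) := by
  simpa using b3qt_ctx [] b h

lemma b3qt_rule {l r : List (Fin 3)} (h : (l, r) ∈ B3MonRules) : B3Qt l r :=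
  EqvGen.rel _ _ ⟨[], l, r, [], h, by simp, by simp⟩

def b3rep (k : ℕ) : List (Fin 3) := List.replicate k 2

lemma b3rep_succ (k : ℕ) : b3rep (k + 1) = 2 :: b3rep k := rfl

lemma b3rep_append_cons (k : ℕ) (t : List (Fin 3)) :
    b3rep k ++ 2 :: t = b3rep (k + 1) ++ t := by
  induction k with
  | zero => rfl
  | succ n ih => simp only [b3rep_succ, List.cons_append, ih]

lemma b3qt_comm0 (k : ℕ) : B3Qt (0 :: b3rep k) (b3rep k ++ [0]) := by
  induction k with
  | zero => exact EqvGen.refl _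
  | succ n ih =>
    have h1 : B3Qt (0 :: b3rep (n + 1)) (2 :: 0 :: b3rep n) := by
      refine EqvGen.rel _ _ ⟨[], [0, 2], [2, 0], b3rep n, ?_, by simp [b3rep_succ], by simp⟩
      simp [B3MonRules]
    refine h1.trans _ _ _ ?_
    have := b3qt_congrL [2] ih
    simpa [b3rep_succ] using this

lemma b3qt_comm1 (k : ℕ) : B3Qt (1 :: b3rep k) (b3rep k ++ [1]) := by
  induction k with
  | zero => exact EqvGen.refl _
  | succ n ih =>
    have h1 : B3Qt (1 :: b3rep (n + 1)) (2 :: 1 :: b3rep n) := by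
      refine EqvGen.rel _ _ ⟨[], [1, 2], [2, 1], b3rep n, ?_, by simp [b3rep_succ], by simp⟩
      simp [B3MonRules]
    refine h1.trans _ _ _ ?_
    have := b3qt_congrL [2] ih
    simpa [b3rep_succ] using this

end RWlemmas

section Normal

/-- `b3hd? x t`: `t` is empty or starts with `x`. -/
def b3hd? (x : Fin 3) (t : List (Fin 3)) : Prop := ∀ y ∈ t.head?, y = x

lemma b3hd?_nil (x : Fin 3) : b3hd? x [] := fun y hy => by simp at hy

lemma b3hd?_cons_self (x : Fin 3) (t : List (Fin 3)) : b3hd? x (x :: t) :=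
  fun y hy => ((by simpa using hy : x = y)).symm

/-- Normal forms: words in `{0,1}` with no factor `000` and no factor `11`. -/
inductive B3NF : List (Fin 3) → Prop
  | nil : B3NF []
  | one (t) (h : B3NF t) (h0 : b3hd? 0 t) : B3NF (1 :: t)
  | a1 (t) (h : B3NF t) (h1 : b3hd? 1 t) : B3NF (0 :: t)
  | a2 (t) (h : B3NF t) (h1 : b3hd? 1 t) : B3NF (0 :: 0 :: t)

def b3consL (x : Fin 3) (p : ℕ × List (Fin 3)) : ℕ × List (Fin 3) :=
  if x = 2 then (p.1 + 1, p.2)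
  else if x = 0 then
    if p.2.take 2 = [0, 0] then (p.1 + 1, p.2.drop 2) else (p.1, 0 :: p.2)
  else
    if p.2.take 1 = [1] then (p.1 + 1, p.2.drop 1) else (p.1, 1 :: p.2)

def b3nf : List (Fin 3) → ℕ × List (Fin 3)
  | [] => (0, [])
  | x :: t => b3consL x (b3nf t)

lemma b3consL_spec (x : Fin 3) (p : ℕ × List (Fin 3)) (h : B3NF p.2) :
    B3NF (b3consL x p).2 ∧
      B3Qt (x :: (b3rep p.1 ++ p.2)) (b3rep (b3consL x p).1 ++ (b3consL x p).2) := by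
  obtain ⟨k, s⟩ := p
  simp only at h ⊢
  have hx : x = 0 ∨ x = 1 ∨ x = 2 := by revert x; decide
  rcases hx with rfl | rfl | rfl
  · -- x = 0
    by_cases hs : s.take 2 = [0, 0]
    · -- s starts with 0,0 : must come from `a2`
      cases h with
      | nil => simp at hs
      | one t h h0 => simp [List.take_succ_cons] at hs
      | a1 t h h1 =>
        exfalso
        cases t with
        | nil => simp at hs
        | cons y t' =>
          have hy : y = 1 := h1 y rfl
          subst hy
          simp [List.take_succ_cons] at hs
      | a2 t h h1 =>
        have hc : b3consL 0 (k, 0 :: 0 :: t) = (k + 1, t) := by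
          simp [b3consL]
        rw [hc]
        refine ⟨h, ?_⟩
        refine EqvGen.trans _ (b3rep k ++ [0, 0, 0] ++ t) _ ?_ ?_
        · have := b3qt_congrR (0 :: 0 :: t) (b3qt_comm0 k)
          simpa using this
        · have := b3qt_ctx (b3rep k) t
            (b3qt_rule (show ([0,0,0],[2]) ∈ B3MonRules by simp [B3MonRules]))
          have h2 : b3rep k ++ [2] ++ t = b3rep (k + 1) ++ t := by
            simpa using b3rep_append_cons k t
          rw [h2] at this
          exact this
    · have hc : b3consL 0 (k, s) = (k, 0 :: s) := by
        simp [b3consL, hs]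
      rw [hc]
      constructor
      · cases h with
        | nil => exact B3NF.a1 [] B3NF.nil (b3hd?_nil 1)
        | one t h h0 => exact B3NF.a1 (1 :: t) (B3NF.one t h h0) (b3hd?_cons_self 1 t)
        | a1 t h h1 => exact B3NF.a2 t h h1
        | a2 t h h1 => exact absurd (by simp [List.take_succ_cons]) hs
      · have := b3qt_congrR s (b3qt_comm0 k)
        simpa using this
  · -- x = 1
    by_cases hs : s.take 1 = [1]
    · cases h with
      | nil => simp at hs
      | a1 t h h1 => simp [List.take_succ_cons] at hs
      | a2 t h h1 => simp [List.take_succ_cons] at hs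
      | one t h h0 =>
        have hc : b3consL 1 (k, 1 :: t) = (k + 1, t) := by
          simp [b3consL]
        rw [hc]
        refine ⟨h, ?_⟩
        refine EqvGen.trans _ (b3rep k ++ [1, 1] ++ t) _ ?_ ?_
        · have := b3qt_congrR (1 :: t) (b3qt_comm1 k)
          simpa using this
        · have := b3qt_ctx (b3rep k) t
            (b3qt_rule (show ([1,1],[2]) ∈ B3MonRules by simp [B3MonRules]))
          have h2 : b3rep k ++ [2] ++ t = b3rep (k + 1) ++ t := by
            simpa using b3rep_append_cons k t
          rw [h2] at this
          exact this
    · have hc : b3consL 1 (k, s) = (k, 1 :: s) := by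
        simp [b3consL, hs]
      rw [hc]
      constructor
      · cases h with
        | nil => exact B3NF.one [] B3NF.nil (b3hd?_nil 0)
        | one t h h0 => exact absurd (by simp [List.take_succ_cons]) hs
        | a1 t h h1 => exact B3NF.one (0 :: t) (B3NF.a1 t h h1) (b3hd?_cons_self 0 t)
        | a2 t h h1 =>
          exact B3NF.one (0 :: 0 :: t) (B3NF.a2 t h h1) (b3hd?_cons_self 0 (0 :: t))
      · have := b3qt_congrR s (b3qt_comm1 k)
        simpa using this
  · -- x = 2
    have hc : b3consL 2 (k, s) = (k + 1, s) := by simp [b3consL]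
    rw [hc]
    exact ⟨h, EqvGen.refl _⟩

lemma b3nf_spec : ∀ u : List (Fin 3),
    B3NF (b3nf u).2 ∧ B3Qt u (b3rep (b3nf u).1 ++ (b3nf u).2)
  | [] => ⟨B3NF.nil, EqvGen.refl _⟩
  | x :: t => by
    obtain ⟨h1, h2⟩ := b3nf_spec t
    obtain ⟨g1, g2⟩ := b3consL_spec x (b3nf t) h1
    refine ⟨by simpa [b3nf] using g1, ?_⟩
    have step1 : B3Qt (x :: t) (x :: (b3rep (b3nf t).1 ++ (b3nf t).2)) := by
      simpa using b3qt_congrL [x] h2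
    simpa [b3nf] using step1.trans _ _ _ g2

end Normal

section Groups

abbrev B3Mu : Bool → Type := fun b => Multiplicative (ZMod (cond b 3 2))

def b3psif : Fin 3 → CoprodI B3Mu := fun i =>
  if i = 0 then CoprodI.of (i := true) (Multiplicative.ofAdd 1)
  else if i = 1 then CoprodI.of (i := false) (Multiplicative.ofAdd 1)
  else 1

lemma b3hpsi : ∀ r ∈ B3Rels, FreeGroup.lift b3psif r = 1 := by
  intro r hr
  rcases hr with rfl | rfl <;>
    simp only [map_mul, map_pow, map_inv, FreeGroup.lift_apply_of, b3psif] <;> norm_num <;>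
    rw [← map_pow] <;>
    simp [← ofAdd_nsmul] <;> decide

def b3phif : Fin 3 → Multiplicative ℤ := fun i =>
  if i = 0 then Multiplicative.ofAdd 2 else if i = 1 then Multiplicative.ofAdd 3
  else Multiplicative.ofAdd 6

lemma b3hphi : ∀ r ∈ B3Rels, FreeGroup.lift b3phif r = 1 := by
  intro r hr
  rcases hr with rfl | rfl <;>
    simp only [map_mul, map_pow, map_inv, FreeGroup.lift_apply_of, b3phif] <;> decide

noncomputable def b3psi : PresentedGroup B3Rels →* CoprodI B3Mu :=
  PresentedGroup.toGroup b3hpsi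

def b3phi : PresentedGroup B3Rels →* Multiplicative ℤ :=
  PresentedGroup.toGroup b3hphi

lemma b3relator_eq_one {r : FreeGroup (Fin 3)} (h : r ∈ B3Rels) :
    PresentedGroup.mk B3Rels r = 1 :=
  (QuotientGroup.eq_one_iff r).mpr (Subgroup.subset_normalClosure h)

/-- Abbreviation for the product of a positive word in the presented group. -/
def b3P (u : List (Fin 3)) : PresentedGroup B3Rels :=
  (u.map fun i => (PresentedGroup.of i : PresentedGroup B3Rels)).prod

lemma b3hA : (PresentedGroup.of 0 : PresentedGroup B3Rels) ^ 3 = PresentedGroup.of 2 := by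
  have h := b3relator_eq_one (show _ ∈ B3Rels from Or.inl rfl)
  have h2 : (PresentedGroup.of 0 : PresentedGroup B3Rels) ^ 3 *
      (PresentedGroup.of 2 : PresentedGroup B3Rels)⁻¹ = 1 := by
    simpa [map_mul, map_pow, map_inv, PresentedGroup.of] using h
  exact mul_inv_eq_one.mp h2

lemma b3hB : (PresentedGroup.of 1 : PresentedGroup B3Rels) ^ 2 = PresentedGroup.of 2 := by
  have h := b3relator_eq_one (show _ ∈ B3Rels from Or.inr rfl)
  have h2 : (PresentedGroup.of 1 : PresentedGroup B3Rels) ^ 2 *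
      (PresentedGroup.of 2 : PresentedGroup B3Rels)⁻¹ = 1 := by
    simpa [map_mul, map_pow, map_inv, PresentedGroup.of] using h
  exact mul_inv_eq_one.mp h2

lemma b3step_eq {u v : List (Fin 3)} (h : RWStep B3MonRules u v) : b3P u = b3P v := by
  obtain ⟨a, l, r, b, hm, rfl, rfl⟩ := h
  simp only [b3P, List.map_append, List.prod_append]
  have hlr : b3P l = b3P r := by
    simp only [B3MonRules, Set.mem_insert_iff, Set.mem_singleton_iff, Prod.mk.injEq] at hm
    rcases hm with ⟨rfl, rfl⟩ | ⟨rfl, rfl⟩ | ⟨rfl, rfl⟩ | ⟨rfl, rfl⟩ <;>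
      simp only [b3P, List.map_cons, List.map_nil, List.prod_cons, List.prod_nil, mul_one]
    · rw [← b3hA, pow_succ, pow_two, mul_assoc]
    · rw [← b3hB, pow_two]
    · rw [← b3hA, ← pow_succ, ← pow_succ']
    · rw [← b3hB, ← pow_succ, ← pow_succ']
  simpa [b3P] using congrArg (fun z => (a.map fun i =>
    (PresentedGroup.of i : PresentedGroup B3Rels)).prod * z *
    (b.map fun i => (PresentedGroup.of i : PresentedGroup B3Rels)).prod) hlr

lemma b3qt_eq {u v : List (Fin 3)} (h : B3Qt u v) : b3P u = b3P v := by
  induction h with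
  | rel x y hxy => exact b3step_eq hxy
  | refl x => rfl
  | symm x y _ ih => exact ih.symm
  | trans x y z _ _ ih1 ih2 => exact ih1.trans ih2

lemma b3hom_P {H : Type*} [Group H] (F : PresentedGroup B3Rels →* H) (u : List (Fin 3)) :
    F (b3P u) = (u.map fun i => F (PresentedGroup.of i)).prod := by
  rw [b3P, map_list_prod, List.map_map]
  rfl

end Groups

section Encoding

def b3enc : List (Fin 3) → List (Σ b : Bool, B3Mu b)
  | [] => []
  | x :: t =>
    if x = 1 then ⟨false, Multiplicative.ofAdd 1⟩ :: b3enc t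
    else if x = 0 then
      match t with
      | [] => [⟨true, Multiplicative.ofAdd 1⟩]
      | y :: t' =>
        if y = 0 then ⟨true, Multiplicative.ofAdd 2⟩ :: b3enc t'
        else ⟨true, Multiplicative.ofAdd 1⟩ :: b3enc (y :: t')
    else b3enc t

lemma b3enc_one (t) : b3enc (1 :: t) = ⟨false, Multiplicative.ofAdd 1⟩ :: b3enc t := by
  rw [b3enc.eq_def]; simp

lemma b3enc_a1 (t) (h1 : b3hd? 1 t) :
    b3enc (0 :: t) = ⟨true, Multiplicative.ofAdd 1⟩ :: b3enc t := by
  cases t with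
  | nil => rw [b3enc.eq_def]; norm_num [Fin.ext_iff, b3enc]
  | cons y t' =>
    have hy : y = 1 := h1 y rfl
    subst hy
    rw [b3enc.eq_def]; norm_num [Fin.ext_iff]

lemma b3enc_a2 (t) : b3enc (0 :: 0 :: t) = ⟨true, Multiplicative.ofAdd 2⟩ :: b3enc t := by
  rw [b3enc.eq_def]; norm_num [Fin.ext_iff]

lemma b3enc_spec {s : List (Fin 3)} (h : B3NF s) :
    (∀ l ∈ b3enc s, l.2 ≠ 1) ∧
      ((b3enc s).Chain' fun l l' => l.1 ≠ l'.1) ∧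
      ((b3enc s).head?.map Sigma.fst = s.head?.map fun y => decide (y = 0)) := by
  induction h with
  | nil => simp [b3enc, List.Chain']
  | one t h h0 ih =>
    rw [b3enc_one]
    obtain ⟨ih1, ih2, ih3⟩ := ih
    refine ⟨?_, ?_, by simp⟩
    · intro l hl
      rcases List.mem_cons.mp hl with rfl | hl
      · decide
      · exact ih1 l hl
    · simp only [List.Chain', List.isChain_cons]
      refine ⟨?_, ih2⟩
      intro b hb
      cases t with
      | nil => simp [b3enc] at hb
      | cons y t' =>
        have hy : y = 0 := h0 y rfl
        subst hy
        have hb' : (b3enc (0 :: t')).head? = some b := by simpa using hb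
        rw [hb'] at ih3
        simp at ih3
        simp [ih3]
  | a1 t h h1 ih =>
    rw [b3enc_a1 t h1]
    obtain ⟨ih1, ih2, ih3⟩ := ih
    refine ⟨?_, ?_, by simp⟩
    · intro l hl
      rcases List.mem_cons.mp hl with rfl | hl
      · decide
      · exact ih1 l hl
    · simp only [List.Chain', List.isChain_cons]
      refine ⟨?_, ih2⟩
      intro b hb
      cases t with
      | nil => simp [b3enc] at hb
      | cons y t' =>
        have hy : y = 1 := h1 y rfl
        subst hy
        have hb' : (b3enc (1 :: t')).head? = some b := by simpa using hb
        rw [hb'] at ih3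
        simp at ih3
        simp [ih3]
  | a2 t h h1 ih =>
    rw [b3enc_a2]
    obtain ⟨ih1, ih2, ih3⟩ := ih
    refine ⟨?_, ?_, by simp⟩
    · intro l hl
      rcases List.mem_cons.mp hl with rfl | hl
      · decide
      · exact ih1 l hl
    · simp only [List.Chain', List.isChain_cons]
      refine ⟨?_, ih2⟩
      intro b hb
      cases t with
      | nil => simp [b3enc] at hb
      | cons y t' =>
        have hy : y = 1 := h1 y rfl
        subst hy
        have hb' : (b3enc (1 :: t')).head? = some b := by simpa using hb
        rw [hb'] at ih3
        simp at ih3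
        simp [ih3]

lemma b3psif_0 : b3psif 0 = CoprodI.of (i := true) (Multiplicative.ofAdd 1) := by
  norm_num [b3psif]

lemma b3psif_1 : b3psif 1 = CoprodI.of (i := false) (Multiplicative.ofAdd 1) := by
  norm_num [b3psif, Fin.ext_iff]

lemma b3psif_2 : b3psif 2 = 1 := by
  norm_num [b3psif, Fin.ext_iff]

lemma b3enc_prod {s : List (Fin 3)} (h : B3NF s) :
    ((b3enc s).map fun l => CoprodI.of l.2).prod = (s.map b3psif).prod := by
  induction h with
  | nil => simp [b3enc]
  | one t h h0 ih =>
    rw [b3enc_one]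
    simp only [List.map_cons, List.prod_cons, ih, b3psif_1]
  | a1 t h h1 ih =>
    rw [b3enc_a1 t h1]
    simp only [List.map_cons, List.prod_cons, ih, b3psif_0]
  | a2 t h h1 ih =>
    rw [b3enc_a2]
    simp only [List.map_cons, List.prod_cons, ih, b3psif_0]
    rw [← mul_assoc, ← map_mul]
    congr 2

lemma b3enc_inj {s : List (Fin 3)} (h : B3NF s) :
    ∀ {s' : List (Fin 3)}, B3NF s' → b3enc s = b3enc s' → s = s' := by
  induction h with
  | nil =>
    intro s' h' he
    cases h' with
    | nil => rfl
    | one t g g0 => rw [b3enc_one] at he; exact absurd he (by simp [b3enc])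
    | a1 t g g1 => rw [b3enc_a1 t g1] at he; exact absurd he (by simp [b3enc])
    | a2 t g g1 => rw [b3enc_a2] at he; exact absurd he (by simp [b3enc])
  | one t h h0 ih =>
    intro s' h' he
    cases h' with
    | nil => rw [b3enc_one] at he; exact absurd he (by simp [b3enc])
    | one t2 g g0 =>
      rw [b3enc_one, b3enc_one] at he
      injection he with hh ht
      rw [ih g ht]
    | a1 t2 g g1 =>
      rw [b3enc_one, b3enc_a1 t2 g1] at he
      injection he with hh ht
      exact absurd hh (by decide)
    | a2 t2 g g1 =>
      rw [b3enc_one, b3enc_a2] at he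
      injection he with hh ht
      exact absurd hh (by decide)
  | a1 t h h1 ih =>
    intro s' h' he
    cases h' with
    | nil => rw [b3enc_a1 t h1] at he; exact absurd he (by simp [b3enc])
    | one t2 g g0 =>
      rw [b3enc_a1 t h1, b3enc_one] at he
      injection he with hh ht
      exact absurd hh (by decide)
    | a1 t2 g g1 =>
      rw [b3enc_a1 t h1, b3enc_a1 t2 g1] at he
      injection he with hh ht
      rw [ih g ht]
    | a2 t2 g g1 =>
      rw [b3enc_a1 t h1, b3enc_a2] at he
      injection he with hh ht
      exact absurd hh (by decide)
  | a2 t h h1 ih =>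
    intro s' h' he
    cases h' with
    | nil => rw [b3enc_a2] at he; exact absurd he (by simp [b3enc])
    | one t2 g g0 =>
      rw [b3enc_a2, b3enc_one] at he
      injection he with hh ht
      exact absurd hh (by decide)
    | a1 t2 g g1 =>
      rw [b3enc_a2, b3enc_a1 t2 g1] at he
      injection he with hh ht
      exact absurd hh (by decide)
    | a2 t2 g g1 =>
      rw [b3enc_a2, b3enc_a2] at he
      injection he with hh ht
      rw [ih g ht]

lemma b3word_prod_inj :
    Function.Injective (CoprodI.Word.prod : CoprodI.Word B3Mu → CoprodI B3Mu) := by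
  have h : (CoprodI.Word.prod : CoprodI.Word B3Mu → CoprodI B3Mu) =
      ⇑(CoprodI.Word.equiv (M := B3Mu)).symm := rfl
  rw [h]
  exact (CoprodI.Word.equiv (M := B3Mu)).symm.injective

lemma b3psilist_inj {s s' : List (Fin 3)} (h : B3NF s) (h' : B3NF s')
    (he : (s.map b3psif).prod = (s'.map b3psif).prod) : s = s' := by
  obtain ⟨e11, e12, -⟩ := b3enc_spec h
  obtain ⟨e21, e22, -⟩ := b3enc_spec h'
  have hp : (CoprodI.Word.prod ⟨b3enc s, e11, e12⟩ : CoprodI B3Mu) =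
      CoprodI.Word.prod ⟨b3enc s', e21, e22⟩ := by
    show ((b3enc s).map fun l => CoprodI.of l.2).prod =
      ((b3enc s').map fun l => CoprodI.of l.2).prod
    rw [b3enc_prod h, b3enc_prod h']
    exact he
  have hw := b3word_prod_inj hp
  have hl : b3enc s = b3enc s' := congrArg CoprodI.Word.toList hw
  exact b3enc_inj h h' hl

end Encoding

/-- The monoid `Mon⟨a, b, c | a³ = c, b² = c, ac = ca, bc = cb⟩` embeds into `B₃`:
two positive words are equal in `B₃` iff they are equal in the monoid. -/
theorem B3_monoid_embeds :
    ∀ u v : List (Fin 3),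
      ((u.map fun i => (PresentedGroup.of i : PresentedGroup B3Rels)).prod =
        (v.map fun i => (PresentedGroup.of i : PresentedGroup B3Rels)).prod) ↔
      Relation.EqvGen (RWStep B3MonRules) u v := by
  intro u v
  constructor
  · intro hP
    obtain ⟨hn1, hq1⟩ := b3nf_spec u
    obtain ⟨hn2, hq2⟩ := b3nf_spec v
    have hPu : b3P u = b3P (b3rep (b3nf u).1 ++ (b3nf u).2) := b3qt_eq hq1
    have hPv : b3P v = b3P (b3rep (b3nf v).1 ++ (b3nf v).2) := b3qt_eq hq2
    have hPP : b3P (b3rep (b3nf u).1 ++ (b3nf u).2) =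
        b3P (b3rep (b3nf v).1 ++ (b3nf v).2) := by
      rw [← hPu, ← hPv]; exact hP
    -- apply ψ to get equality of the {0,1}-parts
    have hpsi := congrArg b3psi hPP
    rw [b3hom_P, b3hom_P] at hpsi
    have hof : ∀ i : Fin 3, b3psi (PresentedGroup.of i) = b3psif i := fun i =>
      PresentedGroup.toGroup.of b3hpsi
    simp only [hof] at hpsi
    have hrep1 : ∀ k : ℕ, ((b3rep k).map b3psif).prod = 1 := by
      intro k
      simp [b3rep, List.map_replicate, b3psif_2]
    have hs : ((b3nf u).2.map b3psif).prod = ((b3nf v).2.map b3psif).prod := by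
      rw [List.map_append, List.map_append, List.prod_append, List.prod_append,
        hrep1, hrep1, one_mul, one_mul] at hpsi
      exact hpsi
    have hs2 : (b3nf u).2 = (b3nf v).2 := b3psilist_inj hn1 hn2 hs
    -- apply φ to get equality of the exponents of c
    have hphi := congrArg b3phi hPP
    rw [b3hom_P, b3hom_P] at hphi
    have hof' : ∀ i : Fin 3, b3phi (PresentedGroup.of i) = b3phif i := fun i =>
      PresentedGroup.toGroup.of b3hphi
    simp only [hof'] at hphi
    have hphif2 : b3phif 2 = Multiplicative.ofAdd 6 := by
      norm_num [b3phif, Fin.ext_iff]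
    have hrep2 : ∀ k : ℕ, ((b3rep k).map b3phif).prod = Multiplicative.ofAdd 6 ^ k := by
      intro k
      simp [b3rep, List.map_replicate, hphif2]
    rw [List.map_append, List.map_append, List.prod_append, List.prod_append,
      hrep2, hrep2, hs2] at hphi
    have hpow : (Multiplicative.ofAdd (6 : ℤ)) ^ (b3nf u).1 =
        (Multiplicative.ofAdd (6 : ℤ)) ^ (b3nf v).1 := mul_right_cancel hphi
    have hk : (b3nf u).1 = (b3nf v).1 := by
      have := congrArg Multiplicative.toAdd hpow
      simp only [toAdd_pow, toAdd_ofAdd, nsmul_eq_mul] at this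
      omega
    have hfinal : b3rep (b3nf u).1 ++ (b3nf u).2 = b3rep (b3nf v).1 ++ (b3nf v).2 := by
      rw [hs2, hk]
    refine hq1.trans _ _ _ ?_
    rw [hfinal]
    exact hq2.symm _ _
  · intro h
    exact b3qt_eq h
end
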